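/- If $P$ is a primitive column-stochastic $n\times n$ matrix with right Perron eigenvector $\pi$ normalized so that $\mathbf{1}^\top\pi = 1$, then for iterations $x[k+1] = Px[k]$, $y[k+1]=Py[k]$ with $y[0]=\mathbf{1}$, the ratio $z_j[k] = x_j[k]/y_j[k]$ converges as $k\to\infty$ to $\frac{1}{n}\sum_{i=1}^n x_i[0]$ for every $j$. -/

import Mathlib

open Finset Filter

namespace RCaux
variable {n : ℕ}

lemma mulVec_ge (A : Matrix (Fin n) (Fin n) ℝ)
    (hA : ∀ i j, 0 ≤ A i j) (hrow : ∀ i, ∑ j, A i j = 1)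
    (v : Fin n → ℝ) (c : ℝ) (h : ∀ i, c ≤ v i) (i : Fin n) :
    c ≤ A.mulVec v i := by
  have : A.mulVec v i = ∑ j, A i j * v j := rfl
  rw [this]
  calc c = ∑ j, A i j * c := by rw [← Finset.sum_mul, hrow, one_mul]
    _ ≤ ∑ j, A i j * v j :=
      Finset.sum_le_sum fun j _ => mul_le_mul_of_nonneg_left (h j) (hA i j)

lemma mulVec_le (A : Matrix (Fin n) (Fin n) ℝ)
    (hA : ∀ i j, 0 ≤ A i j) (hrow : ∀ i, ∑ j, A i j = 1)
    (v : Fin n → ℝ) (c : ℝ) (h : ∀ i, v i ≤ c) (i : Fin n) :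
    A.mulVec v i ≤ c := by
  have : A.mulVec v i = ∑ j, A i j * v j := rfl
  rw [this]
  calc ∑ j, A i j * v j ≤ ∑ j, A i j * c :=
      Finset.sum_le_sum fun j _ => mul_le_mul_of_nonneg_left (h j) (hA i j)
    _ = c := by rw [← Finset.sum_mul, hrow, one_mul]

lemma dobrushin (Q : Matrix (Fin n) (Fin n) ℝ) (δ : ℝ)
    (hQ : ∀ i j, δ ≤ Q i j) (hrow : ∀ i, ∑ j, Q i j = 1)
    (v : Fin n → ℝ) (m M : ℝ) (hm : ∀ i, m ≤ v i) (hM : ∀ i, v i ≤ M)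
    (i i' : Fin n) :
    Q.mulVec v i - Q.mulVec v i' ≤ (1 - n * δ) * (M - m) := by
  have hup : Q.mulVec v i ≤ (1 - n * δ) * M + δ * ∑ l, v l := by
    have : Q.mulVec v i = ∑ l, (Q i l - δ) * v l + δ * ∑ l, v l := by
      show ∑ l, Q i l * v l = _
      rw [Finset.mul_sum, ← Finset.sum_add_distrib]
      congr 1; ext l; ring
    rw [this]
    have h1 : ∑ l, (Q i l - δ) * v l ≤ ∑ l, (Q i l - δ) * M :=
      Finset.sum_le_sum fun l _ =>
        mul_le_mul_of_nonneg_left (hM l) (by linarith [hQ i l])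
    have h2 : ∑ l, (Q i l - δ) * M = (1 - n * δ) * M := by
      rw [← Finset.sum_mul, Finset.sum_sub_distrib, hrow]
      simp [Finset.card_univ]
    linarith
  have hlo : (1 - n * δ) * m + δ * ∑ l, v l ≤ Q.mulVec v i' := by
    have : Q.mulVec v i' = ∑ l, (Q i' l - δ) * v l + δ * ∑ l, v l := by
      show ∑ l, Q i' l * v l = _
      rw [Finset.mul_sum, ← Finset.sum_add_distrib]
      congr 1; ext l; ring
    rw [this]
    have h1 : ∑ l, (Q i' l - δ) * m ≤ ∑ l, (Q i' l - δ) * v l :=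
      Finset.sum_le_sum fun l _ =>
        mul_le_mul_of_nonneg_left (hm l) (by linarith [hQ i' l])
    have h2 : ∑ l, (Q i' l - δ) * m = (1 - n * δ) * m := by
      rw [← Finset.sum_mul, Finset.sum_sub_distrib, hrow]
      simp [Finset.card_univ]
    linarith
  nlinarith [hup, hlo]

/-- column sums of powers of a column-stochastic matrix are 1 -/
lemma col_sum_pow (P : Matrix (Fin n) (Fin n) ℝ)
    (hPcol : ∀ i, ∑ j, P j i = 1) (k : ℕ) (i : Fin n) :
    ∑ l, (P ^ k) l i = 1 := by
  induction k generalizing i with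
  | zero => rw [pow_zero]; simp [Matrix.one_apply]
  | succ k ih =>
    rw [pow_succ]
    have : ∀ l, (P ^ k * P) l i = ∑ t, (P ^ k) l t * P t i := fun l => rfl
    simp_rw [this]
    rw [Finset.sum_comm]
    calc ∑ t, ∑ l, (P ^ k) l t * P t i
        = ∑ t, (∑ l, (P ^ k) l t) * P t i := by
          congr 1; ext t; rw [Finset.sum_mul]
      _ = ∑ t, P t i := by
          congr 1; ext t; rw [ih t, one_mul]
      _ = 1 := hPcol i

end RCaux


/-- Convergence of the basic (delay-free) Ratio Consensus algorithm: for a primitive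
column-stochastic matrix `P` with right Perron eigenvector `π` normalized to
`1ᵀπ = 1`, the iterations `x[k+1] = Px[k]`, `y[k+1] = Py[k]` with `y[0] = 1` give
ratios converging to the average of the initial values. -/
theorem ratio_consensus_converges
    (n : ℕ) (hn : 1 ≤ n)
    (P : Matrix (Fin n) (Fin n) ℝ)
    (hPnonneg : ∀ i j, 0 ≤ P i j)
    (hPcol : ∀ i, ∑ j, P j i = 1)
    (hprim : ∃ K : ℕ, 1 ≤ K ∧ ∀ i j, 0 < (P ^ K) i j)
    (π : Fin n → ℝ)
    (hπeig : P.mulVec π = π)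
    (hπnorm : ∑ i, π i = 1)
    (x y : ℕ → Fin n → ℝ)
    (hx : ∀ k, x (k + 1) = P.mulVec (x k))
    (hy : ∀ k, y (k + 1) = P.mulVec (y k))
    (hy0 : ∀ i, y 0 i = 1) :
    ∀ j, Filter.Tendsto (fun k => x k j / y k j) Filter.atTop
      (nhds ((∑ i, x 0 i) / n)) := by
  obtain ⟨K, hK1, hKpos⟩ := hprim
  have hne : Nonempty (Fin n) := ⟨⟨0, hn⟩⟩
  have he : (Finset.univ : Finset (Fin n)).Nonempty := Finset.univ_nonempty
  -- the transpose A is row-stochastic and nonnegative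
  set A : Matrix (Fin n) (Fin n) ℝ := P.transpose with hAdef
  have hAnn : ∀ i l, 0 ≤ A i l := fun i l => hPnonneg l i
  have hArow : ∀ i, ∑ l, A i l = 1 := fun i => hPcol i
  -- powers of A
  have hApow : ∀ k i l, (A ^ k) i l = (P ^ k) l i := by
    intro k i l
    rw [hAdef, ← Matrix.transpose_pow]
    rfl
  have hAKrow : ∀ i, ∑ l, (A ^ K) i l = 1 := by
    intro i
    simp_rw [hApow]
    exact RCaux.col_sum_pow P hPcol K i
  have hAKnn : ∀ i l, 0 ≤ (A ^ K) i l := fun i l => (by rw [hApow]; exact (hKpos l i).le)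
  -- minimal entry δ of A ^ K
  obtain ⟨i0, l0, hδdef⟩ : ∃ i0 l0, ∀ i l, (A ^ K) i0 l0 ≤ (A ^ K) i l := by
    obtain ⟨p, _, hp⟩ := Finset.exists_min_image (Finset.univ : Finset (Fin n × Fin n))
      (fun p => (A ^ K) p.1 p.2) (Finset.univ_nonempty)
    exact ⟨p.1, p.2, fun i l => hp (i, l) (Finset.mem_univ _)⟩
  set δ : ℝ := (A ^ K) i0 l0 with hδ
  have hδpos : 0 < δ := by rw [hδ, hApow]; exact hKpos l0 i0
  set c : ℝ := 1 - n * δ with hc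
  have hc0 : 0 ≤ c := by
    have h1 : (n : ℝ) * δ = ∑ _l : Fin n, δ := by
      rw [Finset.sum_const, Finset.card_univ]; simp [mul_comm]
    have h2 : ∑ _l : Fin n, δ ≤ ∑ l, (A ^ K) i0 l :=
      Finset.sum_le_sum fun l _ => hδdef i0 l
    rw [hc]; rw [hAKrow i0] at h2; linarith [h1 ▸ h2]
  have hc1 : c < 1 := by
    have : 0 < (n : ℝ) * δ := by
      apply mul_pos _ hδpos
      exact_mod_cast Nat.lt_of_lt_of_le Nat.zero_lt_one hn
    rw [hc]; linarith
  intro j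
  -- column j of P ^ k as a vector over i
  set v : ℕ → Fin n → ℝ := fun k i => (P ^ k) j i with hv
  have hvstep : ∀ k, v (k + 1) = A.mulVec (v k) := by
    intro k; ext i
    have : A.mulVec (v k) i = ∑ l, A i l * v k l := rfl
    rw [this, hv]
    show (P ^ (k+1)) j i = _
    rw [pow_succ]
    show ∑ l, (P ^ k) j l * P l i = _
    congr 1; ext l; rw [hAdef]; show _ = P l i * (P ^ k) j l; ring
  have hvK : ∀ k, v (k + K) = (A ^ K).mulVec (v k) := by
    intro k; ext i
    have : (A ^ K).mulVec (v k) i = ∑ l, (A ^ K) i l * v k l := rfl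
    rw [this, hv]
    show (P ^ (k + K)) j i = _
    rw [pow_add]
    show ∑ l, (P ^ k) j l * (P ^ K) l i = _
    congr 1; ext l; rw [hApow]; ring
  set m : ℕ → ℝ := fun k => Finset.univ.inf' he (v k) with hm
  set M : ℕ → ℝ := fun k => Finset.univ.sup' he (v k) with hM
  have hmle : ∀ k i, m k ≤ v k i := fun k i => Finset.inf'_le _ (Finset.mem_univ i)
  have hMge : ∀ k i, v k i ≤ M k := fun k i => Finset.le_sup' _ (Finset.mem_univ i)
  have hmM : ∀ k, m k ≤ M k := fun k => le_trans (hmle k (Classical.arbitrary _)) (hMge k _)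
  have hmmono : Monotone m := by
    apply monotone_nat_of_le_succ
    intro k
    rw [show m (k+1) = Finset.univ.inf' he (v (k+1)) from rfl]
    apply Finset.le_inf'
    intro i _
    rw [hvstep k]
    exact RCaux.mulVec_ge A hAnn hArow (v k) (m k) (hmle k) i
  have hManti : Antitone M := by
    apply antitone_nat_of_succ_le
    intro k
    rw [show M (k+1) = Finset.univ.sup' he (v (k+1)) from rfl]
    apply Finset.sup'_le
    intro i _
    rw [hvstep k]
    exact RCaux.mulVec_le A hAnn hArow (v k) (M k) (hMge k) i
  set osc : ℕ → ℝ := fun k => M k - m k with hosc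
  have hosc0 : ∀ k, 0 ≤ osc k := fun k => by simp [hosc]; linarith [hmM k]
  have hoscanti : Antitone osc := fun a b hab => by
    simp only [hosc]
    have := hmmono hab; have := hManti hab; linarith
  have hoscK : ∀ k, osc (k + K) ≤ c * osc k := by
    intro k
    have hb : ∀ i i', v (k + K) i - v (k + K) i' ≤ c * (M k - m k) := by
      intro i i'
      rw [hvK k]
      exact RCaux.dobrushin (A ^ K) δ (fun i l => hδdef i l) hAKrow (v k)
        (m k) (M k) (hmle k) (hMge k) i i'
    obtain ⟨iM, _, hiM⟩ := Finset.exists_mem_eq_sup' he (v (k + K))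
    obtain ⟨im, _, him⟩ := Finset.exists_mem_eq_inf' he (v (k + K))
    show M (k + K) - m (k + K) ≤ c * (M k - m k)
    rw [show M (k + K) = Finset.univ.sup' he (v (k+K)) from rfl,
        show m (k + K) = Finset.univ.inf' he (v (k+K)) from rfl, hiM, him]
    exact hb iM im
  -- geometric decay along multiples of K
  have hgeo : ∀ q, osc (K * q) ≤ c ^ q * osc 0 := by
    intro q
    induction q with
    | zero => simp
    | succ q ih =>
      have h1 : osc (K * q + K) ≤ c * osc (K * q) := hoscK (K * q)
      have h2 : c * osc (K * q) ≤ c * (c ^ q * osc 0) :=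
        mul_le_mul_of_nonneg_left ih hc0
      calc osc (K * (q + 1)) = osc (K * q + K) := by ring_nf
        _ ≤ c * (c ^ q * osc 0) := le_trans h1 h2
        _ = c ^ (q + 1) * osc 0 := by ring
  have hoscbound : ∀ k, osc k ≤ c ^ (k / K) * osc 0 := by
    intro k
    have h1 : K * (k / K) ≤ k := Nat.mul_div_le k K
    exact le_trans (hoscanti h1) (hgeo (k / K))
  -- osc tends to 0
  have hdivtop : Tendsto (fun k => k / K) atTop atTop := by
    apply tendsto_atTop_atTop.2
    intro b
    exact ⟨b * K, fun k hk => (Nat.le_div_iff_mul_le (Nat.lt_of_lt_of_le Nat.zero_lt_one hK1)).2 hk⟩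
  have hpow0 : Tendsto (fun q : ℕ => c ^ q * osc 0) atTop (nhds 0) := by
    have := (tendsto_pow_atTop_nhds_zero_of_lt_one hc0 hc1).mul_const (osc 0)
    simpa using this
  have hosctend : Tendsto osc atTop (nhds 0) :=
    squeeze_zero hosc0 hoscbound (hpow0.comp hdivtop)
  -- express x and y through powers of P
  have hxk : ∀ k, x k = (P ^ k).mulVec (x 0) := by
    intro k
    induction k with
    | zero => rw [pow_zero, Matrix.one_mulVec]
    | succ k ih => rw [hx k, ih, Matrix.mulVec_mulVec, ← pow_succ']
  have hyk : ∀ k, y k = (P ^ k).mulVec (y 0) := by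
    intro k
    induction k with
    | zero => rw [pow_zero, Matrix.one_mulVec]
    | succ k ih => rw [hy k, ih, Matrix.mulVec_mulVec, ← pow_succ']
  have hxkj : ∀ k, x k j = ∑ i, v k i * x 0 i := by
    intro k; rw [hxk k]; rfl
  have hykj : ∀ k, y k j = ∑ i, v k i := by
    intro k; rw [hyk k]
    show ∑ i, (P ^ k) j i * y 0 i = _
    congr 1; ext i; rw [hy0 i, mul_one]
  -- lower bound on y for k ≥ K
  set ε : ℝ := n * δ with hε
  have hεpos : 0 < ε := by
    apply mul_pos _ hδpos
    exact_mod_cast Nat.lt_of_lt_of_le Nat.zero_lt_one hn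
  have hmKδ : δ ≤ m K := by
    apply Finset.le_inf'
    intro i _
    show δ ≤ (P ^ K) j i
    rw [← hApow K i j]
    exact hδdef i j
  have hylb : ∀ k, K ≤ k → ε ≤ y k j := by
    intro k hk
    rw [hykj k]
    have h1 : ∀ i : Fin n, δ ≤ v k i := fun i =>
      le_trans (le_trans hmKδ (hmmono hk)) (hmle k i)
    calc ε = ∑ _i : Fin n, δ := by
          rw [Finset.sum_const, Finset.card_univ]; simp [hε, mul_comm]
      _ ≤ ∑ i, v k i := Finset.sum_le_sum fun i _ => h1 i
  -- centered initial data
  set s : ℝ := ∑ i, x 0 i with hs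
  set z0 : Fin n → ℝ := fun i => x 0 i - s / n with hz0
  have hnne : (n : ℝ) ≠ 0 := by positivity
  have hz0sum : ∑ i, z0 i = 0 := by
    simp only [hz0, Finset.sum_sub_distrib, Finset.sum_const, Finset.card_univ,
      Fintype.card_fin, nsmul_eq_mul]
    field_simp
    exact sub_self _
  set C : ℝ := ∑ i, |z0 i| with hC
  set w : ℕ → ℝ := fun k => ∑ i, v k i * z0 i with hw
  have hwbound : ∀ k, |w k| ≤ osc k * C := by
    intro k
    have heq : w k = ∑ i, (v k i - m k) * z0 i := by
      rw [hw]
      simp only [sub_mul, Finset.sum_sub_distrib]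
      rw [← Finset.mul_sum, hz0sum, mul_zero, sub_zero]
    rw [heq]
    calc |∑ i, (v k i - m k) * z0 i| ≤ ∑ i, |(v k i - m k) * z0 i| :=
        Finset.abs_sum_le_sum_abs _ _
      _ ≤ ∑ i, osc k * |z0 i| := by
          apply Finset.sum_le_sum
          intro i _
          rw [abs_mul]
          apply mul_le_mul_of_nonneg_right _ (abs_nonneg _)
          rw [abs_of_nonneg (by linarith [hmle k i])]
          have := hMge k i; simp only [hosc]; linarith
      _ = osc k * C := by rw [hC, Finset.mul_sum]
  have hwtend : Tendsto w atTop (nhds 0) := by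
    apply squeeze_zero_norm hwbound
    simpa using hosctend.mul_const C
  -- the ratio
  have hdecomp : ∀ k, K ≤ k → x k j / y k j = s / n + w k / y k j := by
    intro k hk
    have hy0' : y k j ≠ 0 := ne_of_gt (lt_of_lt_of_le hεpos (hylb k hk))
    have hxw : x k j = (s / n) * y k j + w k := by
      rw [hxkj k, hykj k, hw, Finset.mul_sum, ← Finset.sum_add_distrib]
      congr 1; ext i; rw [hz0]; ring
    rw [hxw]
    field_simp
  have hwy : Tendsto (fun k => w k / y k j) atTop (nhds 0) := by
    apply squeeze_zero_norm' (a := fun k => |w k| / ε)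
    · filter_upwards [eventually_ge_atTop K] with k hk
      have hy' := hylb k hk
      rw [Real.norm_eq_abs, abs_div, abs_of_pos (lt_of_lt_of_le hεpos hy')]
      gcongr
    · have h1 : Tendsto (fun k => |w k|) atTop (nhds 0) := by
        simpa using hwtend.abs
      simpa using h1.div_const ε
  have hfinal : Tendsto (fun k => s / n + w k / y k j) atTop (nhds (s / n)) := by
    simpa using (tendsto_const_nhds (x := s / n) (f := atTop)).add hwy
  apply hfinal.congr'
  filter_upwards [eventually_ge_atTop K] with k hk
  exact (hdecomp k hk).symm
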